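/- We have 𝒩₀ = {(∅, A) : A ⊆ E and ₋ₐM is acyclic} and 𝒩_m = {(N, ∅) : N is an NBC subset of M̲}, and the composition ψ = ψ_m ∘ ψ_{m−1} ∘ ⋯ ∘ ψ₁ is a bijection from 𝒩₀ onto 𝒩_m; consequently the map sending A to the unique N with ψ(∅, A) = (N, ∅) is a bijection from {A ⊆ E : ₋ₐM acyclic} onto the set of NBC subsets of M̲. -/

import Mathlib

open Finset

/-- The support of a signed subset `X = (X⁺, X⁻)`. -/
def supp {α : Type} [DecidableEq α] (X : Finset α × Finset α) : Finset α := X.1 ∪ X.2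

/-- An oriented matroid on ground set `α`, given by its collection of signed circuits,
satisfying the signed circuit axioms (C1)-(C4). -/
structure OM (α : Type) [DecidableEq α] where
  C : Set (Finset α × Finset α)
  disj : ∀ X ∈ C, Disjoint X.1 X.2
  not_empty_mem : ((∅ : Finset α), (∅ : Finset α)) ∉ C
  neg_mem : ∀ X ∈ C, (X.2, X.1) ∈ C
  incomp : ∀ X ∈ C, ∀ Y ∈ C, supp X ⊆ supp Y → X = Y ∨ X = (Y.2, Y.1)
  elimAx : ∀ X ∈ C, ∀ Y ∈ C, X ≠ Y → X ≠ (Y.2, Y.1) → ∀ e ∈ X.1 ∩ Y.2,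
    ∃ Z ∈ C, Z.1 ⊆ (X.1 ∪ Y.1).erase e ∧ Z.2 ⊆ (X.2 ∪ Y.2).erase e

/-- A collection of signed subsets is acyclic if it contains no positive member. -/
def Acyclic {α : Type} (C : Set (Finset α × Finset α)) : Prop :=
  ∀ X ∈ C, X.2 ≠ ∅

/-- Reorientation of a signed subset by `A`. -/
def reorient {α : Type} [DecidableEq α] (A : Finset α) (X : Finset α × Finset α) :
    Finset α × Finset α :=
  ((X.1 \ A) ∪ (X.2 ∩ A), (X.2 \ A) ∪ (X.1 ∩ A))

/-- Reorientation of a collection of signed subsets by `A`. -/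
def reorientC {α : Type} [DecidableEq α] (A : Finset α)
    (C : Set (Finset α × Finset α)) : Set (Finset α × Finset α) :=
  reorient A '' C

/-- Deletion: keep the members whose support avoids `D`. -/
def delC {α : Type} [DecidableEq α] (D : Finset α)
    (C : Set (Finset α × Finset α)) : Set (Finset α × Finset α) :=
  {X ∈ C | Disjoint (supp X) D}

/-- The pre-circuits of the contraction by `T`. -/
def contrPre {α : Type} [DecidableEq α] (T : Finset α)
    (C : Set (Finset α × Finset α)) : Set (Finset α × Finset α) :=
  {Z | ∃ Y ∈ C, supp Y \ T ≠ ∅ ∧ Z = (Y.1 \ T, Y.2 \ T)}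

/-- Contraction: the support-inclusion-minimal members of `contrPre T C`. -/
def contrC {α : Type} [DecidableEq α] (T : Finset α)
    (C : Set (Finset α × Finset α)) : Set (Finset α × Finset α) :=
  {Z ∈ contrPre T C | ∀ W ∈ contrPre T C, supp W ⊆ supp Z → supp W = supp Z}

/-- `N` is an NBC subset of the underlying matroid of `M`: it contains no
broken circuit, i.e. no circuit of the underlying matroid with its maximal
element deleted. -/
def IsNBC {α : Type} [DecidableEq α] [LinearOrder α] (M : OM α) (N : Finset α) : Prop :=
  ∀ X ∈ M.C, ∀ h : (supp X).Nonempty, ¬ (supp X).erase ((supp X).max' h) ⊆ N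

/-- `E_k = {e₁, …, e_k}`: the first `k` elements of the ground set `Fin m`. -/
def Ek (m k : ℕ) : Finset (Fin m) := Finset.filter (fun i => (i : ℕ) < k) Finset.univ

/-- `M` is loopless: no signed circuit has support of size one. -/
def Loopless {m : ℕ} (M : OM (Fin m)) : Prop := ∀ X ∈ M.C, (supp X).card ≠ 1

/-- `M(N, A) = ₋ₐ(M ∖ (E_k − N) / N)`. -/
def MNA {m : ℕ} (M : OM (Fin m)) (k : ℕ) (N A : Finset (Fin m)) :
    Set (Finset (Fin m) × Finset (Fin m)) :=
  reorientC A (contrC N (delC (Ek m k \ N) M.C))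

/-- The set `𝒩_k` of pairs `(N, A)` with `N ⊆ E_k` an NBC subset of the underlying
matroid, `A ⊆ E − E_k`, and `M(N, A)` acyclic. -/
def NFam {m : ℕ} (M : OM (Fin m)) (k : ℕ) : Set (Finset (Fin m) × Finset (Fin m)) :=
  {p | p.1 ⊆ Ek m k ∧ IsNBC M p.1 ∧ p.2 ⊆ (Ek m k)ᶜ ∧ Acyclic (MNA M k p.1 p.2)}

open scoped Classical in
/-- The map `ψ_k` (where `j = k - 1` and `e = e_k`), defined on `𝒩_{k-1}`:
`ψ_k(N, A) = (N ∪ {e_k}, A)` if `e_k ∉ A` and `₋{e_k}M(N, A)` is acyclic,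
`ψ_k(N, A) = (N, A)` if `e_k ∉ A` and `₋{e_k}M(N, A)` is not acyclic, and
`ψ_k(N, A) = (N, A − {e_k})` if `e_k ∈ A`. -/
noncomputable def psi {m : ℕ} (M : OM (Fin m)) (j : ℕ) (e : Fin m)
    (p : Finset (Fin m) × Finset (Fin m)) : Finset (Fin m) × Finset (Fin m) :=
  if e ∈ p.2 then (p.1, p.2.erase e)
  else if Acyclic (reorientC {e} (MNA M j p.1 p.2)) then (insert e p.1, p.2)
  else p

/-- The composition `ψ_k ∘ ψ_{k-1} ∘ ⋯ ∘ ψ₁`. -/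
noncomputable def psiIter {m : ℕ} (M : OM (Fin m)) :
    ℕ → (Finset (Fin m) × Finset (Fin m)) → Finset (Fin m) × Finset (Fin m)
  | 0, p => p
  | (j + 1), p => if h : j < m then psi M j ⟨j, h⟩ (psiIter M j p) else psiIter M j p
section Basics
variable {α : Type} [DecidableEq α]

lemma supp_eq_empty_iff {X : Finset α × Finset α} : supp X = ∅ ↔ X = (∅, ∅) := by
  cases X with
  | mk a b => simp [supp, Finset.union_eq_empty, Prod.ext_iff]

lemma OM.supp_nonempty (M : OM α) {X : Finset α × Finset α} (hX : X ∈ M.C) :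
    (supp X).Nonempty := by
  rcases Finset.eq_empty_or_nonempty (supp X) with h | h
  · exfalso; apply M.not_empty_mem; rwa [supp_eq_empty_iff.mp h] at hX
  · exact h

lemma supp_reorient (A : Finset α) (X : Finset α × Finset α) :
    supp (reorient A X) = supp X := by
  ext a
  simp only [supp, reorient, Finset.mem_union, Finset.mem_sdiff, Finset.mem_inter]
  tauto

lemma reorient_neg (A : Finset α) (X : Finset α × Finset α) :
    reorient A (X.2, X.1) = ((reorient A X).2, (reorient A X).1) := rfl

lemma reorient_reorient {A B : Finset α} (h : Disjoint A B) (X : Finset α × Finset α) :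
    reorient B (reorient A X) = reorient (A ∪ B) X := by
  have hd : ∀ a, a ∈ A → a ∈ B → False := fun a ha hb => Finset.disjoint_left.mp h ha hb
  rw [Prod.ext_iff]
  constructor <;>
  · ext a
    simp only [reorient, Finset.mem_union, Finset.mem_sdiff, Finset.mem_inter]
    have := hd a
    tauto

lemma reorient_reorient_self (A : Finset α) (X : Finset α × Finset α) :
    reorient A (reorient A X) = X := by
  rw [Prod.ext_iff]
  constructor <;>
  · ext a
    simp only [reorient, Finset.mem_union, Finset.mem_sdiff, Finset.mem_inter]
    tauto

lemma reorient_inj {A : Finset α} {X Y : Finset α × Finset α}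
    (h : reorient A X = reorient A Y) : X = Y := by
  rw [← reorient_reorient_self A X, h, reorient_reorient_self]

lemma reorient_erase_subset {B : Finset α} {Z X Y : Finset α × Finset α} {e : α}
    (h1 : Z.1 ⊆ (X.1 ∪ Y.1).erase e) (h2 : Z.2 ⊆ (X.2 ∪ Y.2).erase e) :
    (reorient B Z).1 ⊆ ((reorient B X).1 ∪ (reorient B Y).1).erase e ∧
    (reorient B Z).2 ⊆ ((reorient B X).2 ∪ (reorient B Y).2).erase e := by
  constructor <;> intro a ha <;>
  · simp only [reorient, Finset.mem_union, Finset.mem_sdiff, Finset.mem_inter] at ha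
    have k1 : a ∈ Z.1 → a ≠ e ∧ (a ∈ X.1 ∨ a ∈ Y.1) := by
      intro h; have := h1 h
      simpa only [Finset.mem_erase, Finset.mem_union] using this
    have k2 : a ∈ Z.2 → a ≠ e ∧ (a ∈ X.2 ∨ a ∈ Y.2) := by
      intro h; have := h2 h
      simpa only [Finset.mem_erase, Finset.mem_union] using this
    simp only [reorient, Finset.mem_erase, Finset.mem_union, Finset.mem_sdiff,
      Finset.mem_inter]
    tauto

/-- Reorientation of an oriented matroid. -/
def OM.reor (M : OM α) (B : Finset α) : OM α where
  C := reorientC B M.C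
  disj := by
    rintro X ⟨Y, hY, rfl⟩
    have h := M.disj Y hY
    rw [Finset.disjoint_left] at h ⊢
    intro a ha ha'
    simp only [reorient, Finset.mem_union, Finset.mem_sdiff, Finset.mem_inter] at ha ha'
    have := @h a
    tauto
  not_empty_mem := by
    rintro ⟨Y, hY, hEq⟩
    apply M.not_empty_mem
    have h : supp Y = ∅ := by
      rw [← supp_reorient B Y, hEq]; simp [supp]
    rwa [supp_eq_empty_iff.mp h] at hY
  neg_mem := by
    rintro X ⟨Y, hY, rfl⟩
    exact ⟨(Y.2, Y.1), M.neg_mem Y hY, reorient_neg B Y⟩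
  incomp := by
    rintro X ⟨Y, hY, rfl⟩ X' ⟨Y', hY', rfl⟩ hsub
    rw [supp_reorient, supp_reorient] at hsub
    rcases M.incomp Y hY Y' hY' hsub with h | h
    · left; rw [h]
    · right; rw [h]; exact reorient_neg B Y'
  elimAx := by
    rintro X ⟨Y, hY, rfl⟩ X' ⟨Y', hY', rfl⟩ hne hne' e he
    have hne1 : Y ≠ Y' := fun h => hne (by rw [h])
    have hne2 : Y ≠ (Y'.2, Y'.1) := fun h => hne' (by rw [h]; exact reorient_neg B Y')
    rw [Finset.mem_inter] at he
    obtain ⟨he1, he2⟩ := he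
    by_cases hB : e ∈ B
    · have hY2 : e ∈ Y.2 := by
        simp only [reorient, Finset.mem_union, Finset.mem_sdiff, Finset.mem_inter] at he1
        tauto
      have hY'1 : e ∈ Y'.1 := by
        simp only [reorient, Finset.mem_union, Finset.mem_sdiff, Finset.mem_inter] at he2
        tauto
      have hne1' : Y' ≠ Y := Ne.symm hne1
      have hne2' : Y' ≠ (Y.2, Y.1) := by
        intro h
        apply hne2
        rw [h]
      obtain ⟨Z, hZ, hZ1, hZ2⟩ := M.elimAx Y' hY' Y hY hne1' hne2' e
        (Finset.mem_inter.mpr ⟨hY'1, hY2⟩)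
      have hZ1' : Z.1 ⊆ (Y.1 ∪ Y'.1).erase e := by
        intro a ha; have := hZ1 ha
        simp only [Finset.mem_erase, Finset.mem_union] at this ⊢
        tauto
      have hZ2' : Z.2 ⊆ (Y.2 ∪ Y'.2).erase e := by
        intro a ha; have := hZ2 ha
        simp only [Finset.mem_erase, Finset.mem_union] at this ⊢
        tauto
      obtain ⟨g1, g2⟩ := reorient_erase_subset (B := B) hZ1' hZ2'
      exact ⟨reorient B Z, ⟨Z, hZ, rfl⟩, g1, g2⟩
    · have hY1 : e ∈ Y.1 := by
        simp only [reorient, Finset.mem_union, Finset.mem_sdiff, Finset.mem_inter] at he1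
        tauto
      have hY'2 : e ∈ Y'.2 := by
        simp only [reorient, Finset.mem_union, Finset.mem_sdiff, Finset.mem_inter] at he2
        tauto
      obtain ⟨Z, hZ, hZ1, hZ2⟩ := M.elimAx Y hY Y' hY' hne1 hne2 e
        (Finset.mem_inter.mpr ⟨hY1, hY'2⟩)
      obtain ⟨g1, g2⟩ := reorient_erase_subset (B := B) hZ1 hZ2
      exact ⟨reorient B Z, ⟨Z, hZ, rfl⟩, g1, g2⟩

end Basics
section Minors
variable {α : Type} [DecidableEq α]

lemma supp_restrict (T : Finset α) (Y : Finset α × Finset α) :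
    supp (Y.1 \ T, Y.2 \ T) = supp Y \ T := by
  simp [supp, Finset.union_sdiff_distrib]

lemma reorient_restrict (B T : Finset α) (Y : Finset α × Finset α) :
    reorient B (Y.1 \ T, Y.2 \ T) = ((reorient B Y).1 \ T, (reorient B Y).2 \ T) := by
  rw [Prod.ext_iff]
  constructor <;>
  · ext a
    simp only [reorient, Finset.mem_union, Finset.mem_sdiff, Finset.mem_inter]
    tauto

lemma reorientC_reorientC {A B : Finset α} (h : Disjoint A B)
    (C : Set (Finset α × Finset α)) :
    reorientC B (reorientC A C) = reorientC (A ∪ B) C := by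
  unfold reorientC
  rw [Set.image_image]
  exact Set.image_congr fun x _ => reorient_reorient h x

lemma delC_reorientC (B D : Finset α) (C : Set (Finset α × Finset α)) :
    delC D (reorientC B C) = reorientC B (delC D C) := by
  ext X
  simp only [delC, reorientC, Set.mem_image, Set.mem_setOf_eq]
  constructor
  · rintro ⟨⟨Y, hY, rfl⟩, hdis⟩
    exact ⟨Y, ⟨hY, by rwa [supp_reorient] at hdis⟩, rfl⟩
  · rintro ⟨Y, ⟨hY, hdis⟩, rfl⟩
    exact ⟨⟨Y, hY, rfl⟩, by rwa [supp_reorient]⟩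

lemma contrPre_reorientC (B T : Finset α) (C : Set (Finset α × Finset α)) :
    contrPre T (reorientC B C) = reorientC B (contrPre T C) := by
  ext Z
  simp only [contrPre, reorientC, Set.mem_image, Set.mem_setOf_eq]
  constructor
  · rintro ⟨Y', ⟨Y, hY, rfl⟩, hne, rfl⟩
    refine ⟨(Y.1 \ T, Y.2 \ T), ⟨Y, hY, ?_, rfl⟩, reorient_restrict B T Y⟩
    rwa [supp_reorient] at hne
  · rintro ⟨Z', ⟨Y, hY, hne, rfl⟩, rfl⟩
    exact ⟨reorient B Y, ⟨Y, hY, rfl⟩, by rwa [supp_reorient], reorient_restrict B T Y⟩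

lemma contrC_reorientC (B T : Finset α) (C : Set (Finset α × Finset α)) :
    contrC T (reorientC B C) = reorientC B (contrC T C) := by
  ext Z
  simp only [contrC, Set.mem_setOf_eq, contrPre_reorientC]
  constructor
  · rintro ⟨hZ, hmin⟩
    obtain ⟨W, hW, rfl⟩ := hZ
    refine ⟨W, ⟨hW, fun W' hW' hsub => ?_⟩, rfl⟩
    have h2 := hmin (reorient B W') ⟨W', hW', rfl⟩
      (by rwa [supp_reorient, supp_reorient])
    rwa [supp_reorient, supp_reorient] at h2
  · rintro ⟨W, ⟨hW, hmin⟩, rfl⟩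
    refine ⟨⟨W, hW, rfl⟩, fun W' hW' hsub => ?_⟩
    obtain ⟨V, hV, rfl⟩ := hW'
    have := hmin V hV (by rwa [supp_reorient, supp_reorient] at hsub)
    rwa [supp_reorient, supp_reorient]

lemma sign_translate {B S : Finset α} (hB : B ⊆ S) (Y : Finset α × Finset α) :
    (reorient B Y).2 ∩ S = ∅ ↔ Y.2 ∩ S ⊆ B ∧ Y.1 ∩ B = ∅ := by
  rw [Finset.eq_empty_iff_forall_notMem]
  constructor
  · intro h
    constructor
    · intro a ha
      rw [Finset.mem_inter] at ha
      by_contra hB'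
      exact h a (by
        simp only [reorient, Finset.mem_inter, Finset.mem_union, Finset.mem_sdiff]
        exact ⟨Or.inl ⟨ha.1, hB'⟩, ha.2⟩)
    · rw [Finset.eq_empty_iff_forall_notMem]
      intro a ha
      rw [Finset.mem_inter] at ha
      exact h a (by
        simp only [reorient, Finset.mem_inter, Finset.mem_union, Finset.mem_sdiff]
        exact ⟨Or.inr ⟨ha.1, ha.2⟩, hB ha.2⟩)
  · rintro ⟨h1, h2⟩ a ha
    simp only [reorient, Finset.mem_inter, Finset.mem_union, Finset.mem_sdiff] at ha
    rcases ha with ⟨h | h, hS⟩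
    · exact h.2 (h1 (Finset.mem_inter.mpr ⟨h.1, hS⟩))
    · exact (Finset.eq_empty_iff_forall_notMem.mp h2) a (Finset.mem_inter.mpr ⟨h.1, h.2⟩)

/-- A "violation": a circuit confined to `N ∪ S`, meeting `S`, which is
`B`-reoriented-positive outside `N`. -/
def Viol (C : Set (Finset α × Finset α)) (N S B : Finset α) : Prop :=
  ∃ Y ∈ C, supp Y ⊆ N ∪ S ∧ (supp Y ∩ S).Nonempty ∧ Y.2 ∩ S ⊆ B ∧ Y.1 ∩ B = ∅

lemma OM.keyL (M : OM α) (N S : Finset α)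
    (hcirc : ∀ Z ∈ M.C, ¬ supp Z ⊆ N) {Y : Finset α × Finset α} (hY : Y ∈ M.C)
    (h1 : supp Y ⊆ N ∪ S) (h3 : Y.2 ∩ S = ∅) :
    ∃ Y₀ ∈ M.C, supp Y₀ ⊆ N ∪ S ∧ (supp Y₀ ∩ S).Nonempty ∧ Y₀.2 ∩ S = ∅ ∧
      ∀ W ∈ M.C, supp W ⊆ N ∪ S → supp W ∩ S ⊆ supp Y₀ ∩ S →
        supp W ∩ S = supp Y₀ ∩ S := by
  classical
  have hex : ∃ n, ∃ Y', Y' ∈ M.C ∧ supp Y' ⊆ N ∪ S ∧ Y'.2 ∩ S = ∅ ∧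
      (supp Y' ∩ S).card = n := ⟨_, Y, hY, h1, h3, rfl⟩
  obtain ⟨Y₀, hY₀, hs₀, hsign₀, hcard₀⟩ := Nat.find_spec hex
  have hmin : ∀ Y', Y' ∈ M.C → supp Y' ⊆ N ∪ S → Y'.2 ∩ S = ∅ →
      Nat.find hex ≤ (supp Y' ∩ S).card :=
    fun Y' h a b => Nat.find_min' hex ⟨Y', h, a, b, rfl⟩
  have hsne : ∀ W : Finset α × Finset α, W ∈ M.C → supp W ⊆ N ∪ S →
      (supp W ∩ S).Nonempty := by
    intro W hW hs
    rw [Finset.nonempty_iff_ne_empty]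
    intro hemp
    apply hcirc W hW
    intro a ha
    rcases Finset.mem_union.mp (hs ha) with h' | h'
    · exact h'
    · exact absurd (Finset.mem_inter.mpr ⟨ha, h'⟩) (by rw [hemp]; simp)
  refine ⟨Y₀, hY₀, hs₀, hsne Y₀ hY₀ hs₀, hsign₀, ?_⟩
  intro W hW hWs hWsub
  by_contra hne
  have key : ∀ c : ℕ, ∀ W, W ∈ M.C → supp W ⊆ N ∪ S → supp W ∩ S ⊆ supp Y₀ ∩ S →
      supp W ∩ S ≠ supp Y₀ ∩ S → (W.2 ∩ S).card = c → False := by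
    intro c
    induction c using Nat.strong_induction_on with
    | _ c IH =>
      intro W hW hWs hsub hne hcard
      by_cases hW2 : W.2 ∩ S = ∅
      · have hle := Finset.card_le_card hsub
        have hcne : (supp W ∩ S).card ≠ (supp Y₀ ∩ S).card := fun h =>
          hne (Finset.eq_of_subset_of_card_le hsub (le_of_eq h.symm))
        have := hmin W hW hWs hW2
        omega
      · obtain ⟨f, hf⟩ := Finset.nonempty_iff_ne_empty.mpr hW2
        have hfW2 : f ∈ W.2 := (Finset.mem_inter.mp hf).1
        have hfS : f ∈ S := (Finset.mem_inter.mp hf).2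
        have hfY : f ∈ supp Y₀ ∩ S :=
          hsub (Finset.mem_inter.mpr ⟨Finset.mem_union_right _ hfW2, hfS⟩)
        have hfY1 : f ∈ Y₀.1 := by
          rcases Finset.mem_union.mp (Finset.mem_inter.mp hfY).1 with h | h
          · exact h
          · exact absurd (Finset.mem_inter.mpr ⟨h, hfS⟩) (by rw [hsign₀]; simp)
        have hsuppWneg : supp (W.2, W.1) = supp W := by
          simp [supp, Finset.union_comm]
        have hne1 : Y₀ ≠ W := by
          rintro rfl; exact hne rfl
        have hne2 : Y₀ ≠ (W.2, W.1) := by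
          intro h
          apply hne
          rw [← hsuppWneg, ← h]
        obtain ⟨Z, hZ, hZ1, hZ2⟩ := M.elimAx Y₀ hY₀ W hW hne1 hne2 f
          (Finset.mem_inter.mpr ⟨hfY1, hfW2⟩)
        have hZs : supp Z ⊆ N ∪ S := by
          intro a ha
          rcases Finset.mem_union.mp ha with h | h
          · have := hZ1 h
            rw [Finset.mem_erase] at this
            rcases Finset.mem_union.mp this.2 with h' | h'
            · exact hs₀ (Finset.mem_union_left _ h')
            · exact hWs (Finset.mem_union_left _ h')
          · have := hZ2 h
            rw [Finset.mem_erase] at this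
            rcases Finset.mem_union.mp this.2 with h' | h'
            · exact hs₀ (Finset.mem_union_right _ h')
            · exact hWs (Finset.mem_union_right _ h')
        have hZsub : supp Z ∩ S ⊆ (supp Y₀ ∩ S).erase f := by
          intro a ha
          rw [Finset.mem_inter] at ha
          rw [Finset.mem_erase]
          have haS := ha.2
          rcases Finset.mem_union.mp ha.1 with h | h
          · have := hZ1 h
            rw [Finset.mem_erase] at this
            refine ⟨this.1, ?_⟩
            rcases Finset.mem_union.mp this.2 with h' | h'
            · exact Finset.mem_inter.mpr ⟨Finset.mem_union_left _ h', haS⟩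
            · exact hsub (Finset.mem_inter.mpr ⟨Finset.mem_union_left _ h', haS⟩)
          · have := hZ2 h
            rw [Finset.mem_erase] at this
            refine ⟨this.1, ?_⟩
            rcases Finset.mem_union.mp this.2 with h' | h'
            · exact Finset.mem_inter.mpr ⟨Finset.mem_union_right _ h', haS⟩
            · exact hsub (Finset.mem_inter.mpr ⟨Finset.mem_union_right _ h', haS⟩)
        have hZcard : (Z.2 ∩ S).card < c := by
          have hsub2 : Z.2 ∩ S ⊆ (W.2 ∩ S).erase f := by
            intro a ha
            rw [Finset.mem_inter] at ha
            rw [Finset.mem_erase]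
            have := hZ2 ha.1
            rw [Finset.mem_erase] at this
            refine ⟨this.1, ?_⟩
            rcases Finset.mem_union.mp this.2 with h' | h'
            · exact absurd (Finset.mem_inter.mpr ⟨h', ha.2⟩) (by rw [hsign₀]; simp)
            · exact Finset.mem_inter.mpr ⟨h', ha.2⟩
          calc (Z.2 ∩ S).card ≤ ((W.2 ∩ S).erase f).card := Finset.card_le_card hsub2
            _ < (W.2 ∩ S).card := Finset.card_erase_lt_of_mem hf
            _ = c := hcard
        refine IH _ hZcard Z hZ hZs (hZsub.trans (Finset.erase_subset _ _)) ?_ rfl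
        intro h
        have : f ∈ supp Z ∩ S := h ▸ hfY
        exact (Finset.mem_erase.mp (hZsub this)).1 rfl
  exact key _ W hW hWs hWsub hne rfl

lemma sdiff_eq_inter_of_subset {N S W : Finset α} (hd : Disjoint N S) (h : W ⊆ N ∪ S) :
    W \ N = W ∩ S := by
  ext a
  simp only [Finset.mem_sdiff, Finset.mem_inter]
  constructor
  · rintro ⟨h1, h2⟩
    rcases Finset.mem_union.mp (h h1) with h3 | h3
    · exact absurd h3 h2
    · exact ⟨h1, h3⟩
  · rintro ⟨h1, h2⟩
    exact ⟨h1, fun hN => Finset.disjoint_left.mp hd hN h2⟩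

/-- Characterization of acyclicity of the (reoriented) minor in terms of
violations among circuits of `M` itself. -/
lemma char [Fintype α] (M : OM α) (E N B : Finset α) (hN : N ⊆ E)
    (hcirc : ∀ X ∈ M.C, ¬ supp X ⊆ N) (hB : B ⊆ Eᶜ) :
    Acyclic (reorientC B (contrC N (delC (E \ N) M.C))) ↔
      ¬ Viol M.C N Eᶜ B := by
  have hdisj : Disjoint N Eᶜ := by
    rw [Finset.disjoint_left]
    intro a ha ha'
    exact (Finset.mem_compl.mp ha') (hN ha)
  have hconv : ∀ X : Finset α, Disjoint X (E \ N) ↔ X ⊆ N ∪ Eᶜ := by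
    intro X
    rw [Finset.disjoint_left]
    constructor
    · intro h a ha
      by_cases haN : a ∈ N
      · exact Finset.mem_union_left _ haN
      by_cases haE : a ∈ E
      · exact absurd (Finset.mem_sdiff.mpr ⟨haE, haN⟩) (h ha)
      · exact Finset.mem_union_right _ (Finset.mem_compl.mpr haE)
    · intro h a ha hmem
      rcases Finset.mem_union.mp (h ha) with h1 | h1
      · exact (Finset.mem_sdiff.mp hmem).2 h1
      · exact Finset.mem_compl.mp h1 (Finset.mem_sdiff.mp hmem).1
  have hset : contrC N (delC (E \ N) (reorientC B M.C)) =
      reorientC B (contrC N (delC (E \ N) M.C)) := by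
    rw [delC_reorientC, contrC_reorientC]
  rw [← hset]
  set MB := M.reor B with hMB
  have hcircB : ∀ Z ∈ MB.C, ¬ supp Z ⊆ N := by
    rintro Z ⟨Y, hY, rfl⟩ h
    rw [supp_reorient] at h
    exact hcirc Y hY h
  constructor
  · intro hAc
    rintro ⟨Y, hY, hs, hne, hsign1, hsign2⟩
    have hY'mem : reorient B Y ∈ MB.C := ⟨Y, hY, rfl⟩
    have hY'2 : (reorient B Y).2 ∩ Eᶜ = ∅ := (sign_translate hB Y).mpr ⟨hsign1, hsign2⟩
    obtain ⟨Y₀, hY₀, hs₀, hne₀, hsg₀, hmin₀⟩ := MB.keyL N Eᶜ hcircB hY'mem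
      (by rwa [supp_reorient]) hY'2
    have hY₀del : Y₀ ∈ delC (E \ N) MB.C := ⟨hY₀, (hconv (supp Y₀)).mpr hs₀⟩
    have hsd : supp Y₀ \ N = supp Y₀ ∩ Eᶜ := sdiff_eq_inter_of_subset hdisj hs₀
    have hZpre : (Y₀.1 \ N, Y₀.2 \ N) ∈ contrPre N (delC (E \ N) MB.C) := by
      refine ⟨Y₀, hY₀del, ?_, rfl⟩
      rw [hsd]
      exact Finset.nonempty_iff_ne_empty.mp hne₀
    have hZmem : (Y₀.1 \ N, Y₀.2 \ N) ∈ contrC N (delC (E \ N) MB.C) := by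
      refine ⟨hZpre, ?_⟩
      rintro W ⟨Y₁, ⟨hY₁, hY₁dis⟩, hY₁ne, rfl⟩ hsub
      have hs₁ : supp Y₁ ⊆ N ∪ Eᶜ := (hconv (supp Y₁)).mp hY₁dis
      have hsd₁ : supp Y₁ \ N = supp Y₁ ∩ Eᶜ := sdiff_eq_inter_of_subset hdisj hs₁
      rw [supp_restrict, supp_restrict, hsd, hsd₁] at hsub ⊢
      exact hmin₀ Y₁ hY₁ hs₁ hsub
    have hZ2 : Y₀.2 \ N = ∅ := by
      have : Y₀.2 \ N ⊆ Y₀.2 ∩ Eᶜ := by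
        intro a ha
        rw [Finset.mem_sdiff] at ha
        refine Finset.mem_inter.mpr ⟨ha.1, ?_⟩
        rcases Finset.mem_union.mp (hs₀ (Finset.mem_union_right _ ha.1)) with h | h
        · exact absurd h ha.2
        · exact h
      rw [hsg₀] at this
      exact Finset.subset_empty.mp this
    exact hAc _ hZmem hZ2
  · intro hno X hX
    obtain ⟨⟨Y', hY'del, hne', rfl⟩, _⟩ := hX
    obtain ⟨hY'mem, hY'dis⟩ := hY'del
    obtain ⟨Y, hY, rfl⟩ := hY'mem
    intro hX2
    apply hno
    have hs : supp Y ⊆ N ∪ Eᶜ := by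
      have := (hconv (supp (reorient B Y))).mp hY'dis
      rwa [supp_reorient] at this
    refine ⟨Y, hY, hs, ?_, ?_⟩
    · have : supp (reorient B Y) \ N ⊆ supp Y ∩ Eᶜ := by
        rw [supp_reorient]
        rw [sdiff_eq_inter_of_subset hdisj hs]
      rcases Finset.nonempty_iff_ne_empty.mpr hne' with ⟨a, ha⟩
      exact ⟨a, this ha⟩
    · have hX2' : (reorient B Y).2 \ N = ∅ := hX2
      have h2N : (reorient B Y).2 ⊆ N := by
        intro a ha
        by_contra h
        exact absurd (Finset.mem_sdiff.mpr ⟨ha, h⟩) (by rw [hX2']; simp)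
      have : (reorient B Y).2 ∩ Eᶜ = ∅ := by
        rw [Finset.eq_empty_iff_forall_notMem]
        intro a ha
        rw [Finset.mem_inter] at ha
        exact Finset.disjoint_left.mp hdisj (h2N ha.1) ha.2
      exact (sign_translate hB Y).mp this

end Minors
section FinPart
variable {m : ℕ}

lemma mem_Ek_iff {k : ℕ} {i : Fin m} : i ∈ Ek m k ↔ (i : ℕ) < k := by
  simp [Ek]

lemma mem_EkC_iff {k : ℕ} {i : Fin m} : i ∈ (Ek m k)ᶜ ↔ k ≤ (i : ℕ) := by
  simp [Ek, Finset.mem_compl, not_lt]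

lemma Ek_zero : Ek m 0 = ∅ := by
  ext i; simp [mem_Ek_iff]

lemma Ek_self : Ek m m = Finset.univ := by
  ext i; simp [mem_Ek_iff, i.isLt]

lemma IsNBC.no_subset {α : Type} [DecidableEq α] [LinearOrder α] {M : OM α} {N : Finset α}
    (h : IsNBC M N) {X : Finset α × Finset α} (hX : X ∈ M.C) (hs : supp X ⊆ N) : False :=
  h X hX (M.supp_nonempty hX) ((Finset.erase_subset _ _).trans hs)

lemma IsNBC.mono {α : Type} [DecidableEq α] [LinearOrder α] {M : OM α} {N N' : Finset α}
    (h : IsNBC M N) (hsub : N' ⊆ N) : IsNBC M N' :=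
  fun X hX hne hc => h X hX hne (hc.trans hsub)

lemma isNBC_empty {M : OM (Fin m)} (hM : Loopless M) : IsNBC M (∅ : Finset (Fin m)) := by
  intro X hX hne hc
  have h1 : (supp X).erase ((supp X).max' hne) = ∅ := Finset.subset_empty.mp hc
  have h2 : supp X = {(supp X).max' hne} := by
    rcases (Finset.erase_eq_empty_iff _ _).mp h1 with h | h
    · exact absurd h (Finset.nonempty_iff_ne_empty.mp hne)
    · exact h
  apply hM X hX
  rw [h2]
  simp

lemma nbc_insert_top {M : OM (Fin m)} {N : Finset (Fin m)} {j : ℕ} (hj : j < m)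
    (hN : N ⊆ Ek m j) (hNBC : IsNBC M N) {X : Finset (Fin m) × Finset (Fin m)}
    (hX : X ∈ M.C) (hs : supp X ⊆ insert (⟨j, hj⟩ : Fin m) N) : False := by
  set e : Fin m := ⟨j, hj⟩ with he_def
  have hne := M.supp_nonempty hX
  by_cases he : e ∈ supp X
  · have hmax : (supp X).max' hne = e := by
      apply le_antisymm
      · apply Finset.max'_le
        intro y hy
        rcases Finset.mem_insert.mp (hs hy) with h | h
        · exact le_of_eq h
        · have : (y : ℕ) < j := mem_Ek_iff.mp (hN h)
          exact le_of_lt (by rw [Fin.lt_def]; exact this)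
      · exact Finset.le_max' _ e he
    apply hNBC X hX hne
    rw [hmax]
    intro a ha
    rw [Finset.mem_erase] at ha
    rcases Finset.mem_insert.mp (hs ha.2) with h | h
    · exact absurd h ha.1
    · exact h
  · apply hNBC.no_subset hX
    intro a ha
    rcases Finset.mem_insert.mp (hs ha) with h | h
    · exact absurd (h ▸ ha) he
    · exact h

variable {M : OM (Fin m)}

lemma nbc_no_circuit {N : Finset (Fin m)} (hNBC : IsNBC M N) :
    ∀ X ∈ M.C, ¬ supp X ⊆ N := fun X hX hs => hNBC.no_subset hX hs

lemma acyclic_MNA_iff (k : ℕ) {N A : Finset (Fin m)} (hN : N ⊆ Ek m k)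
    (hNBC : IsNBC M N) (hA : A ⊆ (Ek m k)ᶜ) :
    Acyclic (MNA M k N A) ↔ ¬ Viol M.C N (Ek m k)ᶜ A :=
  char M (Ek m k) N A hN (nbc_no_circuit hNBC) hA

lemma acyclic_flip_iff {j : ℕ} (hj : j < m) {N A : Finset (Fin m)} (hN : N ⊆ Ek m j)
    (hNBC : IsNBC M N) (hA : A ⊆ (Ek m j)ᶜ) (he : (⟨j, hj⟩ : Fin m) ∉ A) :
    Acyclic (reorientC {(⟨j, hj⟩ : Fin m)} (MNA M j N A)) ↔
      ¬ Viol M.C N (Ek m j)ᶜ (insert (⟨j, hj⟩ : Fin m) A) := by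
  have hd : Disjoint A ({(⟨j, hj⟩ : Fin m)} : Finset (Fin m)) := by
    simp [Finset.disjoint_singleton_right, he]
  have hunion : A ∪ {(⟨j, hj⟩ : Fin m)} = insert (⟨j, hj⟩ : Fin m) A := by
    rw [Finset.union_comm, ← Finset.insert_eq]
  have hsub : insert (⟨j, hj⟩ : Fin m) A ⊆ (Ek m j)ᶜ := by
    intro a ha
    rcases Finset.mem_insert.mp ha with rfl | h
    · exact mem_EkC_iff.mpr (le_refl j)
    · exact hA h
  rw [MNA, reorientC_reorientC hd, hunion]
  exact char M (Ek m j) N _ hN (nbc_no_circuit hNBC) hsub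

lemma mem_NFam_iff (k : ℕ) (p : Finset (Fin m) × Finset (Fin m)) :
    p ∈ NFam M k ↔ p.1 ⊆ Ek m k ∧ IsNBC M p.1 ∧ p.2 ⊆ (Ek m k)ᶜ ∧
      ¬ Viol M.C p.1 (Ek m k)ᶜ p.2 := by
  unfold NFam
  simp only [Set.mem_setOf_eq]
  constructor
  · rintro ⟨h1, h2, h3, h4⟩
    exact ⟨h1, h2, h3, (acyclic_MNA_iff k h1 h2 h3).mp h4⟩
  · rintro ⟨h1, h2, h3, h4⟩
    exact ⟨h1, h2, h3, (acyclic_MNA_iff k h1 h2 h3).mpr h4⟩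

-- Transfer lemmas. Throughout, `e = ⟨j, hj⟩`, `Sj = (Ek m j)ᶜ`, `Sk = (Ek m (j+1))ᶜ`.

lemma violUp {j : ℕ} (hj : j < m) {N A B : Finset (Fin m)} (hN : N ⊆ Ek m j)
    (hBA : B ⊆ A) (hAB : ∀ a : Fin m, a ≠ (⟨j, hj⟩ : Fin m) → a ∈ A → a ∈ B) :
    Viol M.C N (Ek m (j + 1))ᶜ B → Viol M.C N (Ek m j)ᶜ A := by
  set e : Fin m := ⟨j, hj⟩ with he_def
  have hev : (e : ℕ) = j := rfl
  rintro ⟨Y, hY, hs, hne, h2, h1⟩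
  have heY : e ∉ supp Y := by
    intro h
    rcases Finset.mem_union.mp (hs h) with h' | h'
    · have := mem_Ek_iff.mp (hN h'); omega
    · have := mem_EkC_iff.mp h'; omega
  have hSkSj : (Ek m (j + 1))ᶜ ⊆ (Ek m j)ᶜ := by
    intro a ha; rw [mem_EkC_iff] at ha ⊢; omega
  refine ⟨Y, hY, hs.trans (Finset.union_subset_union_right hSkSj), ?_, ?_, ?_⟩
  · obtain ⟨a, ha⟩ := hne
    rw [Finset.mem_inter] at ha
    exact ⟨a, Finset.mem_inter.mpr ⟨ha.1, hSkSj ha.2⟩⟩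
  · intro a ha
    rw [Finset.mem_inter] at ha
    have haSk : a ∈ (Ek m (j + 1))ᶜ := by
      have haY : a ∈ supp Y := Finset.mem_union_right _ ha.1
      rcases Finset.mem_union.mp (hs haY) with h' | h'
      · exact absurd (mem_Ek_iff.mp (hN h')) (by have := mem_EkC_iff.mp ha.2; omega)
      · exact h'
    exact hBA (h2 (Finset.mem_inter.mpr ⟨ha.1, haSk⟩))
  · rw [Finset.eq_empty_iff_forall_notMem]
    intro a ha
    rw [Finset.mem_inter] at ha
    have hane : a ≠ e := fun h => heY (h ▸ Finset.mem_union_left _ ha.1)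
    have : a ∈ Y.1 ∩ B := Finset.mem_inter.mpr ⟨ha.1, hAB a hane ha.2⟩
    rw [h1] at this
    exact absurd this (Finset.notMem_empty a)

lemma violT2aA {j : ℕ} (hj : j < m) {N A : Finset (Fin m)} (hN : N ⊆ Ek m j)
    (hA : A ⊆ (Ek m j)ᶜ) :
    Viol M.C (insert (⟨j, hj⟩ : Fin m) N) (Ek m (j + 1))ᶜ A →
      Viol M.C N (Ek m j)ᶜ A ∨ Viol M.C N (Ek m j)ᶜ (insert (⟨j, hj⟩ : Fin m) A) := by
  set e : Fin m := ⟨j, hj⟩ with he_def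
  rintro ⟨Y, hY, hs, hne, h2, h1⟩
  have heSj : e ∈ (Ek m j)ᶜ := mem_EkC_iff.mpr (le_refl j)
  have hSkSj : (Ek m (j + 1))ᶜ ⊆ (Ek m j)ᶜ := by
    intro a ha; rw [mem_EkC_iff] at ha ⊢; omega
  have hs' : supp Y ⊆ N ∪ (Ek m j)ᶜ := by
    intro a ha
    rcases Finset.mem_union.mp (hs ha) with h' | h'
    · rcases Finset.mem_insert.mp h' with rfl | h''
      · exact Finset.mem_union_right _ heSj
      · exact Finset.mem_union_left _ h''
    · exact Finset.mem_union_right _ (hSkSj h')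
  have hne' : (supp Y ∩ (Ek m j)ᶜ).Nonempty := by
    obtain ⟨a, ha⟩ := hne
    rw [Finset.mem_inter] at ha
    exact ⟨a, Finset.mem_inter.mpr ⟨ha.1, hSkSj ha.2⟩⟩
  have hSk : ∀ a : Fin m, a ∈ supp Y → a ∈ (Ek m j)ᶜ → a ≠ e → a ∈ (Ek m (j + 1))ᶜ := by
    intro a haY haSj hane
    rcases Finset.mem_union.mp (hs haY) with h' | h'
    · rcases Finset.mem_insert.mp h' with h'' | h''
      · exact absurd h'' hane
      · exact absurd (mem_Ek_iff.mp (hN h'')) (by have := mem_EkC_iff.mp haSj; omega)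
    · exact h'
  by_cases heY2 : e ∈ Y.2
  · right
    refine ⟨Y, hY, hs', hne', ?_, ?_⟩
    · intro a ha
      rw [Finset.mem_inter] at ha
      by_cases hae : a = e
      · exact hae ▸ Finset.mem_insert_self _ _
      · have : a ∈ Y.2 ∩ (Ek m (j + 1))ᶜ :=
          Finset.mem_inter.mpr ⟨ha.1, hSk a (Finset.mem_union_right _ ha.1) ha.2 hae⟩
        exact Finset.mem_insert_of_mem (h2 this)
    · rw [Finset.eq_empty_iff_forall_notMem]
      intro a ha
      rw [Finset.mem_inter] at ha
      rcases Finset.mem_insert.mp ha.2 with rfl | h''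
      · exact Finset.disjoint_left.mp (M.disj Y hY) ha.1 heY2
      · have : a ∈ Y.1 ∩ A := Finset.mem_inter.mpr ⟨ha.1, h''⟩
        rw [h1] at this
        exact absurd this (Finset.notMem_empty a)
  · left
    refine ⟨Y, hY, hs', hne', ?_, h1⟩
    intro a ha
    rw [Finset.mem_inter] at ha
    have hae : a ≠ e := fun h => heY2 (h ▸ ha.1)
    exact h2 (Finset.mem_inter.mpr
      ⟨ha.1, hSk a (Finset.mem_union_right _ ha.1) ha.2 hae⟩)

end FinPart
section Transfers
variable {m : ℕ} {M : OM (Fin m)}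

lemma nbcInsert {j : ℕ} (hj : j < m) {N A : Finset (Fin m)} (hN : N ⊆ Ek m j)
    (hNBC : IsNBC M N) (hA : A ⊆ (Ek m j)ᶜ) (heA : (⟨j, hj⟩ : Fin m) ∉ A)
    (h1 : ¬ Viol M.C N (Ek m j)ᶜ A)
    (h2 : ¬ Viol M.C N (Ek m j)ᶜ (insert (⟨j, hj⟩ : Fin m) A)) :
    IsNBC M (insert (⟨j, hj⟩ : Fin m) N) := by
  set e : Fin m := ⟨j, hj⟩ with he_def
  have hev : (e : ℕ) = j := rfl
  have heSj : e ∈ (Ek m j)ᶜ := mem_EkC_iff.mpr (by omega)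
  have hNnot : ∀ a : Fin m, a ∈ (Ek m j)ᶜ → a ∉ N := by
    intro a ha h
    have h1' := mem_Ek_iff.mp (hN h)
    have h2' := mem_EkC_iff.mp ha
    omega
  intro X hX hne hc
  set g := (supp X).max' hne with hg_def
  have hgX : g ∈ supp X := Finset.max'_mem _ _
  have heX : e ∈ supp X := by
    by_contra h
    apply hNBC X hX hne
    intro a ha
    rcases Finset.mem_insert.mp (hc ha) with rfl | h'
    · exact absurd (Finset.mem_of_mem_erase ha) h
    · exact h'
  have hle : e ≤ g := Finset.le_max' _ e heX
  have hsX : supp X ⊆ insert g (insert e N) := by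
    intro a ha
    by_cases hag : a = g
    · exact hag ▸ Finset.mem_insert_self _ _
    · exact Finset.mem_insert_of_mem (hc (Finset.mem_erase.mpr ⟨hag, ha⟩))
  by_cases hge : g = e
  · rw [hge] at hsX
    have hsX' : supp X ⊆ insert e N := by
      intro a ha
      rcases Finset.mem_insert.mp (hsX ha) with h | h
      · exact Finset.mem_insert.mpr (Or.inl h)
      · exact h
    have main : ∀ Y : Finset (Fin m) × Finset (Fin m), Y ∈ M.C → supp Y = supp X →
        e ∈ Y.2 → False := by
      intro Y hY hsupp heY2
      apply h2
      have hsY : ∀ a : Fin m, a ∈ supp Y → a ∈ insert e N := by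
        intro a ha
        apply hsX'
        rw [← hsupp]
        exact ha
      refine ⟨Y, hY, ?_, ⟨e, Finset.mem_inter.mpr
        ⟨Finset.mem_union_right _ heY2, heSj⟩⟩, ?_, ?_⟩
      · intro a ha
        rcases Finset.mem_insert.mp (hsY a ha) with rfl | h
        · exact Finset.mem_union_right _ heSj
        · exact Finset.mem_union_left _ h
      · intro a ha
        rw [Finset.mem_inter] at ha
        rcases Finset.mem_insert.mp (hsY a (Finset.mem_union_right _ ha.1)) with rfl | h
        · exact Finset.mem_insert_self _ _
        · exact absurd h (hNnot a ha.2)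
      · rw [Finset.eq_empty_iff_forall_notMem]
        intro a ha
        rw [Finset.mem_inter] at ha
        rcases Finset.mem_insert.mp (hsY a (Finset.mem_union_left _ ha.1)) with rfl | h
        · exact Finset.disjoint_left.mp (M.disj Y hY) ha.1 heY2
        · rcases Finset.mem_insert.mp ha.2 with rfl | h'
          · exact (hNnot e heSj) h
          · exact (hNnot a (hA h')) h
    rcases Finset.mem_union.mp heX with h | h
    · exact main (X.2, X.1) (M.neg_mem X hX) (by simp [supp, Finset.union_comm]) h
    · exact main X hX rfl h
  · have hgvne : (g : ℕ) ≠ j := by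
      intro h
      exact hge (Fin.ext (by omega))
    have hlej : j ≤ (g : ℕ) := by
      rw [Fin.le_def] at hle
      omega
    have hgSj : g ∈ (Ek m j)ᶜ := mem_EkC_iff.mpr (by omega)
    have main : ∀ Y : Finset (Fin m) × Finset (Fin m), Y ∈ M.C → supp Y = supp X →
        (g ∈ A → g ∈ Y.2) → (g ∉ A → g ∈ Y.1) → False := by
      intro Y hY hsupp hg2 hg1
      have heY : e ∈ supp Y := by rw [hsupp]; exact heX
      have hgY : g ∈ supp Y := by rw [hsupp]; exact hgX
      have hsY : ∀ a : Fin m, a ∈ supp Y → a ∈ insert g (insert e N) := by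
        intro a ha
        apply hsX
        rw [← hsupp]
        exact ha
      have hsYU : supp Y ⊆ N ∪ (Ek m j)ᶜ := by
        intro a ha
        rcases Finset.mem_insert.mp (hsY a ha) with rfl | h
        · exact Finset.mem_union_right _ hgSj
        rcases Finset.mem_insert.mp h with rfl | h'
        · exact Finset.mem_union_right _ heSj
        · exact Finset.mem_union_left _ h'
      have hcases : ∀ a : Fin m, a ∈ supp Y → a ∉ N → a = e ∨ a = g := by
        intro a ha haN
        rcases Finset.mem_insert.mp (hsY a ha) with h | h
        · exact Or.inr h
        rcases Finset.mem_insert.mp h with h' | h'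
        · exact Or.inl h'
        · exact absurd h' haN
      rcases Finset.mem_union.mp heY with heY1 | heY2
      · apply h1
        refine ⟨Y, hY, hsYU, ⟨g, Finset.mem_inter.mpr ⟨hgY, hgSj⟩⟩, ?_, ?_⟩
        · intro a ha
          rw [Finset.mem_inter] at ha
          rcases hcases a (Finset.mem_union_right _ ha.1) (hNnot a ha.2) with rfl | rfl
          · exact absurd ha.1 (Finset.disjoint_left.mp (M.disj Y hY) heY1)
          · by_contra hgA
            exact Finset.disjoint_left.mp (M.disj Y hY) (hg1 hgA) ha.1
        · rw [Finset.eq_empty_iff_forall_notMem]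
          intro a ha
          rw [Finset.mem_inter] at ha
          rcases hcases a (Finset.mem_union_left _ ha.1) (hNnot a (hA ha.2)) with rfl | rfl
          · exact heA ha.2
          · exact Finset.disjoint_left.mp (M.disj Y hY) ha.1 (hg2 ha.2)
      · apply h2
        refine ⟨Y, hY, hsYU, ⟨g, Finset.mem_inter.mpr ⟨hgY, hgSj⟩⟩, ?_, ?_⟩
        · intro a ha
          rw [Finset.mem_inter] at ha
          rcases hcases a (Finset.mem_union_right _ ha.1) (hNnot a ha.2) with rfl | rfl
          · exact Finset.mem_insert_self _ _
          · refine Finset.mem_insert_of_mem ?_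
            by_contra hgA
            exact Finset.disjoint_left.mp (M.disj Y hY) (hg1 hgA) ha.1
        · rw [Finset.eq_empty_iff_forall_notMem]
          intro a ha
          rw [Finset.mem_inter] at ha
          rcases Finset.mem_insert.mp ha.2 with rfl | haA
          · exact Finset.disjoint_left.mp (M.disj Y hY) ha.1 heY2
          · rcases hcases a (Finset.mem_union_left _ ha.1) (hNnot a (hA haA)) with rfl | rfl
            · exact heA haA
            · exact Finset.disjoint_left.mp (M.disj Y hY) ha.1 (hg2 haA)
    rcases Finset.mem_union.mp hgX with hg1X | hg2X
    · by_cases hgA : g ∈ A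
      · exact main (X.2, X.1) (M.neg_mem X hX) (by simp [supp, Finset.union_comm])
          (fun _ => hg1X) (fun h => absurd hgA h)
      · exact main X hX rfl (fun h => absurd h hgA) (fun _ => hg1X)
    · by_cases hgA : g ∈ A
      · exact main X hX rfl (fun _ => hg2X) (fun h => absurd hgA h)
      · exact main (X.2, X.1) (M.neg_mem X hX) (by simp [supp, Finset.union_comm])
          (fun h => absurd h hgA) (fun _ => hg2X)

lemma violT3 {j : ℕ} (hj : j < m) {N' A' B : Finset (Fin m)}
    (hNBC : IsNBC M N') (he : (⟨j, hj⟩ : Fin m) ∈ N')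
    (hA'B : A' ⊆ B) (hBA' : ∀ a ∈ B, a ∈ (Ek m (j + 1))ᶜ → a ∈ A') :
    Viol M.C (N'.erase (⟨j, hj⟩ : Fin m)) (Ek m j)ᶜ B →
      Viol M.C N' (Ek m (j + 1))ᶜ A' := by
  set e : Fin m := ⟨j, hj⟩ with he_def
  have hev : (e : ℕ) = j := rfl
  rintro ⟨Y, hY, hs, hne, h2, h1⟩
  have hs' : supp Y ⊆ N' ∪ (Ek m (j + 1))ᶜ := by
    intro a ha
    rcases Finset.mem_union.mp (hs ha) with h | h
    · exact Finset.mem_union_left _ (Finset.mem_of_mem_erase h)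
    · by_cases hae : a = e
      · exact Finset.mem_union_left _ (hae ▸ he)
      · refine Finset.mem_union_right _ ?_
        have h' := mem_EkC_iff.mp h
        have hane : (a : ℕ) ≠ j := fun hh => hae (Fin.ext (by omega))
        rw [mem_EkC_iff]
        omega
  refine ⟨Y, hY, hs', ?_, ?_, ?_⟩
  · rcases Finset.eq_empty_or_nonempty (supp Y ∩ (Ek m (j + 1))ᶜ) with hemp | hne'
    · exfalso
      apply hNBC.no_subset hY
      intro a ha
      rcases Finset.mem_union.mp (hs' ha) with h | h
      · exact h
      · exact absurd (Finset.mem_inter.mpr ⟨ha, h⟩) (by rw [hemp]; simp)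
    · exact hne'
  · intro a ha
    rw [Finset.mem_inter] at ha
    have haSj : a ∈ (Ek m j)ᶜ := by
      have := mem_EkC_iff.mp ha.2
      rw [mem_EkC_iff]
      omega
    exact hBA' a (h2 (Finset.mem_inter.mpr ⟨ha.1, haSj⟩)) ha.2
  · rw [Finset.eq_empty_iff_forall_notMem]
    intro a ha
    rw [Finset.mem_inter] at ha
    have : a ∈ Y.1 ∩ B := Finset.mem_inter.mpr ⟨ha.1, hA'B ha.2⟩
    rw [h1] at this
    exact absurd this (Finset.notMem_empty a)

lemma violT4 {j : ℕ} (hj : j < m) {N' A' : Finset (Fin m)}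
    (hN' : N' ⊆ Ek m (j + 1)) (hNBC : IsNBC M N') (heN : (⟨j, hj⟩ : Fin m) ∉ N')
    (hA' : A' ⊆ (Ek m (j + 1))ᶜ)
    (hk : ¬ Viol M.C N' (Ek m (j + 1))ᶜ A')
    (hins : Viol M.C N' (Ek m j)ᶜ (insert (⟨j, hj⟩ : Fin m) A')) :
    ¬ Viol M.C N' (Ek m j)ᶜ A' := by
  set e : Fin m := ⟨j, hj⟩ with he_def
  have hev : (e : ℕ) = j := rfl
  have heA : e ∉ A' := fun h => by have := mem_EkC_iff.mp (hA' h); omega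
  have hN'j : N' ⊆ Ek m j := by
    intro a ha
    have h1 := mem_Ek_iff.mp (hN' ha)
    have h2 : a ≠ e := fun h => heN (h ▸ ha)
    have : (a : ℕ) ≠ j := fun hh => h2 (Fin.ext (by omega))
    rw [mem_Ek_iff]
    omega
  have hSkSj : (Ek m (j + 1))ᶜ ⊆ (Ek m j)ᶜ := by
    intro a ha
    rw [mem_EkC_iff] at ha ⊢
    omega
  have hSjSk : ∀ a : Fin m, a ∈ (Ek m j)ᶜ → a ≠ e → a ∈ (Ek m (j + 1))ᶜ := by
    intro a ha hane
    rw [mem_EkC_iff] at ha ⊢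
    have : (a : ℕ) ≠ j := fun hh => hane (Fin.ext (by omega))
    omega
  rintro ⟨Y, hY, hYs, hYne, hY2, hY1⟩
  obtain ⟨Z, hZ, hZs, hZne, hZ2, hZ1⟩ := hins
  have transfer : ∀ W : Finset (Fin m) × Finset (Fin m), W ∈ M.C → e ∉ supp W →
      supp W ⊆ N' ∪ (Ek m j)ᶜ → W.2 ∩ (Ek m j)ᶜ ⊆ insert e A' → W.1 ∩ A' = ∅ →
      False := by
    intro W hW heW hWs hW2 hW1
    apply hk
    have hWs' : supp W ⊆ N' ∪ (Ek m (j + 1))ᶜ := by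
      intro a ha
      rcases Finset.mem_union.mp (hWs ha) with h | h
      · exact Finset.mem_union_left _ h
      · exact Finset.mem_union_right _ (hSjSk a h (fun hh => heW (hh ▸ ha)))
    refine ⟨W, hW, hWs', ?_, ?_, hW1⟩
    · rcases Finset.eq_empty_or_nonempty (supp W ∩ (Ek m (j + 1))ᶜ) with hemp | hne'
      · exfalso
        apply hNBC.no_subset hW
        intro a ha
        rcases Finset.mem_union.mp (hWs' ha) with h | h
        · exact h
        · exact absurd (Finset.mem_inter.mpr ⟨ha, h⟩) (by rw [hemp]; simp)
      · exact hne'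
    · intro a ha
      rw [Finset.mem_inter] at ha
      have hane : a ≠ e := fun hh => heW (hh ▸ Finset.mem_union_right _ ha.1)
      have hmem := hW2 (Finset.mem_inter.mpr ⟨ha.1, hSkSj ha.2⟩)
      rcases Finset.mem_insert.mp hmem with h | h
      · exact absurd h hane
      · exact h
  have heY1 : e ∈ Y.1 := by
    have heY2 : e ∉ Y.2 := by
      intro h
      exact heA (hY2 (Finset.mem_inter.mpr ⟨h, mem_EkC_iff.mpr (by omega)⟩))
    by_contra h
    have heY : e ∉ supp Y := by
      intro hh
      rcases Finset.mem_union.mp hh with h' | h'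
      · exact h h'
      · exact heY2 h'
    exact transfer Y hY heY hYs (fun a ha => Finset.mem_insert_of_mem (hY2 ha)) hY1
  have hZ1A : Z.1 ∩ A' = ∅ := by
    rw [Finset.eq_empty_iff_forall_notMem]
    intro a ha
    rw [Finset.mem_inter] at ha
    have : a ∈ Z.1 ∩ insert e A' :=
      Finset.mem_inter.mpr ⟨ha.1, Finset.mem_insert_of_mem ha.2⟩
    rw [hZ1] at this
    exact absurd this (Finset.notMem_empty a)
  have heZ1 : e ∉ Z.1 := by
    intro h
    have : e ∈ Z.1 ∩ insert e A' :=
      Finset.mem_inter.mpr ⟨h, Finset.mem_insert_self _ _⟩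
    rw [hZ1] at this
    exact absurd this (Finset.notMem_empty e)
  have heZ2 : e ∈ Z.2 := by
    by_contra h
    have heZ : e ∉ supp Z := by
      intro hh
      rcases Finset.mem_union.mp hh with h' | h'
      · exact heZ1 h'
      · exact h h'
    exact transfer Z hZ heZ hZs hZ2 hZ1A
  have hA'Sj : A' ⊆ (Ek m j)ᶜ := hA'.trans hSkSj
  have hXmem : reorient A' Y ∈ (M.reor A').C := ⟨Y, hY, rfl⟩
  have hX'mem : reorient A' Z ∈ (M.reor A').C := ⟨Z, hZ, rfl⟩
  have heX1 : e ∈ (reorient A' Y).1 :=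
    Finset.mem_union_left _ (Finset.mem_sdiff.mpr ⟨heY1, heA⟩)
  have heX'2 : e ∈ (reorient A' Z).2 :=
    Finset.mem_union_left _ (Finset.mem_sdiff.mpr ⟨heZ2, heA⟩)
  have hne1 : reorient A' Y ≠ reorient A' Z := by
    intro h
    have hYZ := reorient_inj h
    apply Finset.disjoint_left.mp (M.disj Y hY) heY1
    rw [hYZ]
    exact heZ2
  have hne2 : reorient A' Y ≠ ((reorient A' Z).2, (reorient A' Z).1) := by
    intro h
    have h' : reorient A' Y = reorient A' (Z.2, Z.1) := by rw [h, reorient_neg]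
    have hYZ : Y = (Z.2, Z.1) := reorient_inj h'
    have hY1Z : Y.1 = Z.2 := by rw [hYZ]
    have hY2Z : Y.2 = Z.1 := by rw [hYZ]
    have hsupp : supp Y ⊆ insert e N' := by
      intro a ha
      rcases Finset.mem_union.mp (hYs ha) with h1 | h1
      · exact Finset.mem_insert_of_mem h1
      · rcases Finset.mem_union.mp ha with h2 | h2
        · by_cases hae : a = e
          · exact hae ▸ Finset.mem_insert_self _ _
          · have haZ2 : a ∈ Z.2 := by rw [← hY1Z]; exact h2
            have hmem := hZ2 (Finset.mem_inter.mpr ⟨haZ2, h1⟩)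
            rcases Finset.mem_insert.mp hmem with h3 | h3
            · exact absurd h3 hae
            · exfalso
              have : a ∈ Y.1 ∩ A' := Finset.mem_inter.mpr ⟨h2, h3⟩
              rw [hY1] at this
              exact absurd this (Finset.notMem_empty a)
        · exfalso
          have haA : a ∈ A' := hY2 (Finset.mem_inter.mpr ⟨h2, h1⟩)
          have haZ1 : a ∈ Z.1 := by rw [← hY2Z]; exact h2
          have : a ∈ Z.1 ∩ insert e A' :=
            Finset.mem_inter.mpr ⟨haZ1, Finset.mem_insert_of_mem haA⟩
          rw [hZ1] at this
          exact absurd this (Finset.notMem_empty a)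
    exact nbc_insert_top hj hN'j hNBC hY hsupp
  obtain ⟨W', hW'mem, hW1, hW2⟩ := (M.reor A').elimAx _ hXmem _ hX'mem hne1 hne2 e
    (Finset.mem_inter.mpr ⟨heX1, heX'2⟩)
  obtain ⟨W, hW, rfl⟩ := hW'mem
  apply hk
  have hXsY : supp (reorient A' Y) = supp Y := supp_reorient _ _
  have hXsZ : supp (reorient A' Z) = supp Z := supp_reorient _ _
  have hWfacts : ∀ a : Fin m, a ∈ supp W → a ≠ e ∧ a ∈ N' ∪ (Ek m j)ᶜ := by
    intro a ha
    have ha' : a ∈ supp (reorient A' W) := by rw [supp_reorient]; exact ha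
    rcases Finset.mem_union.mp ha' with h | h
    · have hh := hW1 h
      rw [Finset.mem_erase] at hh
      refine ⟨hh.1, ?_⟩
      rcases Finset.mem_union.mp hh.2 with h' | h'
      · exact hYs (by rw [← hXsY]; exact Finset.mem_union_left _ h')
      · exact hZs (by rw [← hXsZ]; exact Finset.mem_union_left _ h')
    · have hh := hW2 h
      rw [Finset.mem_erase] at hh
      refine ⟨hh.1, ?_⟩
      rcases Finset.mem_union.mp hh.2 with h' | h'
      · exact hYs (by rw [← hXsY]; exact Finset.mem_union_right _ h')
      · exact hZs (by rw [← hXsZ]; exact Finset.mem_union_right _ h')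
  have hWs : supp W ⊆ N' ∪ (Ek m (j + 1))ᶜ := by
    intro a ha
    obtain ⟨hane, hmem⟩ := hWfacts a ha
    rcases Finset.mem_union.mp hmem with h | h
    · exact Finset.mem_union_left _ h
    · exact Finset.mem_union_right _ (hSjSk a h hane)
  have hWne : (supp W ∩ (Ek m (j + 1))ᶜ).Nonempty := by
    rcases Finset.eq_empty_or_nonempty (supp W ∩ (Ek m (j + 1))ᶜ) with hemp | hne'
    · exfalso
      apply hNBC.no_subset hW
      intro a ha
      rcases Finset.mem_union.mp (hWs ha) with h | h
      · exact h
      · exact absurd (Finset.mem_inter.mpr ⟨ha, h⟩) (by rw [hemp]; simp)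
    · exact hne'
  have hsignY : (reorient A' Y).2 ∩ (Ek m j)ᶜ = ∅ :=
    (sign_translate hA'Sj Y).mpr ⟨hY2, hY1⟩
  have hsignZ : (reorient A' Z).2 ∩ (Ek m (j + 1))ᶜ = ∅ := by
    apply (sign_translate hA' Z).mpr
    refine ⟨?_, hZ1A⟩
    intro a ha
    rw [Finset.mem_inter] at ha
    have hmem := hZ2 (Finset.mem_inter.mpr ⟨ha.1, hSkSj ha.2⟩)
    rcases Finset.mem_insert.mp hmem with h | h
    · exact absurd (mem_EkC_iff.mp (h ▸ ha.2)) (by omega)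
    · exact h
  have hsignW : (reorient A' W).2 ∩ (Ek m (j + 1))ᶜ = ∅ := by
    rw [Finset.eq_empty_iff_forall_notMem]
    intro a ha
    rw [Finset.mem_inter] at ha
    have hh := hW2 ha.1
    rw [Finset.mem_erase] at hh
    rcases Finset.mem_union.mp hh.2 with h | h
    · exact absurd (Finset.mem_inter.mpr ⟨h, hSkSj ha.2⟩) (by rw [hsignY]; simp)
    · exact absurd (Finset.mem_inter.mpr ⟨h, ha.2⟩) (by rw [hsignZ]; simp)
  obtain ⟨hs1, hs2⟩ := (sign_translate hA' W).mp hsignW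
  exact ⟨W, hW, hWs, hWne, hs1, hs2⟩

end Transfers
section Step
variable {m : ℕ} {M : OM (Fin m)}

open scoped Classical in
/-- The inverse of `ψ_k`. -/
noncomputable def phiMap (M : OM (Fin m)) (j : ℕ) (e : Fin m)
    (p : Finset (Fin m) × Finset (Fin m)) : Finset (Fin m) × Finset (Fin m) :=
  if e ∈ p.1 then (p.1.erase e, p.2)
  else if Viol M.C p.1 (Ek m j)ᶜ (insert e p.2) then p else (p.1, insert e p.2)

lemma stepBij {j : ℕ} (hj : j < m) :
    Set.BijOn (psi M j (⟨j, hj⟩ : Fin m)) (NFam M j) (NFam M (j + 1)) := by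
  classical
  set e : Fin m := ⟨j, hj⟩ with he_def
  have hev : (e : ℕ) = j := rfl
  have heSj : e ∈ (Ek m j)ᶜ := mem_EkC_iff.mpr (by omega)
  have heEk : e ∉ Ek m j := fun h => by have := mem_Ek_iff.mp h; omega
  have heSk : e ∉ (Ek m (j + 1))ᶜ := fun h => by have := mem_EkC_iff.mp h; omega
  have hEkmono : Ek m j ⊆ Ek m (j + 1) := by
    intro a ha; rw [mem_Ek_iff] at ha ⊢; omega
  have heEk1 : e ∈ Ek m (j + 1) := mem_Ek_iff.mpr (by omega)
  have hSkSj : (Ek m (j + 1))ᶜ ⊆ (Ek m j)ᶜ := by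
    intro a ha; rw [mem_EkC_iff] at ha ⊢; omega
  have hSjSk : ∀ a : Fin m, a ∈ (Ek m j)ᶜ → a ≠ e → a ∈ (Ek m (j + 1))ᶜ := by
    intro a ha hane
    rw [mem_EkC_iff] at ha ⊢
    have : (a : ℕ) ≠ j := fun hh => hane (Fin.ext (by omega))
    omega
  have hEksub : ∀ a : Fin m, a ∈ Ek m (j + 1) → a ≠ e → a ∈ Ek m j := by
    intro a ha hane
    rw [mem_Ek_iff] at ha ⊢
    have : (a : ℕ) ≠ j := fun hh => hane (Fin.ext (by omega))
    omega
  have hMapsPsi : Set.MapsTo (psi M j e) (NFam M j) (NFam M (j + 1)) := by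
    intro p hp
    rw [mem_NFam_iff] at hp
    obtain ⟨hp1, hp2, hp3, hp4⟩ := hp
    unfold psi
    split_ifs with h1 h2
    · rw [mem_NFam_iff]
      refine ⟨hp1.trans hEkmono, hp2, ?_, ?_⟩
      · intro a ha
        rw [Finset.mem_erase] at ha
        exact hSjSk a (hp3 ha.2) ha.1
      · intro hv
        exact hp4 (violUp hj hp1 (Finset.erase_subset _ _)
          (fun a hane haA => Finset.mem_erase.mpr ⟨hane, haA⟩) hv)
    · have hV2 := (acyclic_flip_iff hj hp1 hp2 hp3 h1).mp h2
      rw [mem_NFam_iff]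
      refine ⟨?_, nbcInsert hj hp1 hp2 hp3 h1 hp4 hV2, ?_, ?_⟩
      · intro a ha
        rcases Finset.mem_insert.mp ha with rfl | h
        · exact heEk1
        · exact hEkmono (hp1 h)
      · intro a ha
        exact hSjSk a (hp3 ha) (fun hh => h1 (hh ▸ ha))
      · intro hv
        rcases violT2aA hj hp1 hp3 hv with h | h
        · exact hp4 h
        · exact hV2 h
    · rw [mem_NFam_iff]
      refine ⟨hp1.trans hEkmono, hp2, ?_, ?_⟩
      · intro a ha
        exact hSjSk a (hp3 ha) (fun hh => h1 (hh ▸ ha))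
      · intro hv
        exact hp4 (violUp hj hp1 (subset_refl _) (fun a _ haA => haA) hv)
  have hMapsPhi : Set.MapsTo (phiMap M j e) (NFam M (j + 1)) (NFam M j) := by
    intro p hp
    rw [mem_NFam_iff] at hp
    obtain ⟨hp1, hp2, hp3, hp4⟩ := hp
    unfold phiMap
    split_ifs with h1 h2
    · rw [mem_NFam_iff]
      refine ⟨?_, hp2.mono (Finset.erase_subset _ _), hp3.trans hSkSj, ?_⟩
      · intro a ha
        rw [Finset.mem_erase] at ha
        exact hEksub a (hp1 ha.2) ha.1
      · intro hv
        exact hp4 (violT3 hj hp2 h1 (subset_refl _) (fun a haA _ => haA) hv)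
    · rw [mem_NFam_iff]
      refine ⟨?_, hp2, hp3.trans hSkSj, ?_⟩
      · intro a ha
        exact hEksub a (hp1 ha) (fun hh => h1 (hh ▸ ha))
      · exact violT4 hj hp1 hp2 h1 hp3 hp4 h2
    · rw [mem_NFam_iff]
      refine ⟨?_, hp2, ?_, h2⟩
      · intro a ha
        exact hEksub a (hp1 ha) (fun hh => h1 (hh ▸ ha))
      · intro a ha
        rcases Finset.mem_insert.mp ha with rfl | h
        · exact heSj
        · exact hSkSj (hp3 h)
  have hLeft : ∀ p ∈ NFam M j, phiMap M j e (psi M j e p) = p := by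
    intro p hp
    rw [mem_NFam_iff] at hp
    obtain ⟨hp1, hp2, hp3, hp4⟩ := hp
    have heN : e ∉ p.1 := fun h => heEk (hp1 h)
    unfold psi
    split_ifs with h1 h2
    · unfold phiMap
      dsimp only
      rw [if_neg heN, Finset.insert_erase h1, if_neg hp4]
    · unfold phiMap
      dsimp only
      rw [if_pos (Finset.mem_insert_self e p.1), Finset.erase_insert heN]
    · have hV : Viol M.C p.1 (Ek m j)ᶜ (insert e p.2) := by
        by_contra hV
        exact h2 ((acyclic_flip_iff hj hp1 hp2 hp3 h1).mpr hV)
      unfold phiMap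
      rw [if_neg heN, if_pos hV]
  have hRight : ∀ p ∈ NFam M (j + 1), psi M j e (phiMap M j e p) = p := by
    intro p hp
    rw [mem_NFam_iff] at hp
    obtain ⟨hp1, hp2, hp3, hp4⟩ := hp
    have heA : e ∉ p.2 := fun h => heSk (hp3 h)
    unfold phiMap
    split_ifs with h1 h2
    · have hN'j : p.1.erase e ⊆ Ek m j := by
        intro a ha
        rw [Finset.mem_erase] at ha
        exact hEksub a (hp1 ha.2) ha.1
      have hNBC' := hp2.mono (Finset.erase_subset e p.1)
      have hA'j : p.2 ⊆ (Ek m j)ᶜ := hp3.trans hSkSj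
      have hcond : Acyclic (reorientC {e} (MNA M j (p.1.erase e) p.2)) := by
        rw [acyclic_flip_iff hj hN'j hNBC' hA'j heA]
        intro hv
        refine hp4 (violT3 hj hp2 h1 (Finset.subset_insert _ _) ?_ hv)
        intro a haB haSk
        rcases Finset.mem_insert.mp haB with rfl | h
        · exact absurd haSk heSk
        · exact h
      unfold psi
      dsimp only
      rw [if_neg heA, if_pos hcond, Finset.insert_erase h1]
    · have hN'j : p.1 ⊆ Ek m j := fun a ha => hEksub a (hp1 ha) (fun hh => h1 (hh ▸ ha))
      have hA'j : p.2 ⊆ (Ek m j)ᶜ := hp3.trans hSkSj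
      have hcond : ¬ Acyclic (reorientC {e} (MNA M j p.1 p.2)) := by
        rw [acyclic_flip_iff hj hN'j hp2 hA'j heA]
        exact not_not_intro h2
      unfold psi
      rw [if_neg heA, if_neg hcond]
    · unfold psi
      dsimp only
      rw [if_pos (Finset.mem_insert_self e p.2), Finset.erase_insert heA]
  exact Set.InvOn.bijOn ⟨hLeft, hRight⟩ hMapsPsi hMapsPhi

lemma iterBij (M : OM (Fin m)) :
    ∀ k, k ≤ m → Set.BijOn (psiIter M k) (NFam M 0) (NFam M k) := by
  intro k
  induction k with
  | zero =>
    intro _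
    have h : psiIter M 0 = id := by funext p; rfl
    rw [h]
    exact Set.bijOn_id _
  | succ k IH =>
    intro hk
    have hkm : k < m := hk
    have h : psiIter M (k + 1) = (psi M k ⟨k, hkm⟩) ∘ (psiIter M k) := by
      funext p
      simp [psiIter, hkm]
    rw [h]
    exact (stepBij hkm).comp (IH (le_of_lt hkm))

end Step

section Ends
variable {α : Type} [DecidableEq α]

lemma delC_empty (C : Set (Finset α × Finset α)) : delC (∅ : Finset α) C = C := by
  ext X
  simp [delC]

lemma contrC_empty (M : OM α) : contrC (∅ : Finset α) M.C = M.C := by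
  have hpre : contrPre (∅ : Finset α) M.C = M.C := by
    ext Z
    simp only [contrPre, Set.mem_setOf_eq]
    constructor
    · rintro ⟨Y, hY, hne, rfl⟩
      have h : (Y.1 \ ∅, Y.2 \ ∅) = Y := by simp
      rw [h]
      exact hY
    · intro hZ
      refine ⟨Z, hZ, ?_, by simp⟩
      rw [Finset.sdiff_empty]
      exact Finset.nonempty_iff_ne_empty.mp (M.supp_nonempty hZ)
  unfold contrC
  rw [hpre]
  ext Z
  simp only [Set.mem_setOf_eq]
  constructor
  · rintro ⟨hZ, _⟩
    exact hZ
  · intro hZ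
    refine ⟨hZ, fun W hW hsub => ?_⟩
    rcases M.incomp W hW Z hZ hsub with h | h
    · rw [h]
    · rw [h]; simp [supp, Finset.union_comm]

end Ends
/-- `𝒩₀ = {(∅, A) : ₋ₐM acyclic}`, `𝒩_m = {(N, ∅) : N an NBC subset}`, the composition
`ψ = ψ_m ∘ ⋯ ∘ ψ₁` is a bijection from `𝒩₀` onto `𝒩_m`, and the induced map
`A ↦ N` where `ψ(∅, A) = (N, ∅)` is a bijection from the acyclic reorientation sets
onto the NBC subsets of the underlying matroid. -/
theorem stmt_7 (m : ℕ) (M : OM (Fin m)) (hM : Loopless M) :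
    NFam M 0 = {p | p.1 = ∅ ∧ Acyclic (reorientC p.2 M.C)} ∧
    NFam M m = {p | IsNBC M p.1 ∧ p.2 = ∅} ∧
    Set.BijOn (psiIter M m) (NFam M 0) (NFam M m) ∧
    Set.BijOn (fun A : Finset (Fin m) => (psiIter M m (∅, A)).1)
      {A | Acyclic (reorientC A M.C)} {N | IsNBC M N} := by
  have h0 : NFam M 0 = {p | p.1 = ∅ ∧ Acyclic (reorientC p.2 M.C)} := by
    ext p
    simp only [NFam, Set.mem_setOf_eq]
    have hmna : ∀ A : Finset (Fin m), MNA M 0 ∅ A = reorientC A M.C := by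
      intro A
      unfold MNA
      rw [Ek_zero, show ((∅ : Finset (Fin m)) \ ∅ : Finset (Fin m)) = ∅ by simp,
        delC_empty, contrC_empty M]
    constructor
    · rintro ⟨h1, h2, h3, h4⟩
      have hp1 : p.1 = ∅ := Finset.subset_empty.mp (by rwa [Ek_zero] at h1)
      rw [hp1, hmna] at h4
      exact ⟨hp1, h4⟩
    · rintro ⟨h1, h2⟩
      refine ⟨by rw [h1]; exact Finset.empty_subset _,
        by rw [h1]; exact isNBC_empty hM,
        by rw [Ek_zero, Finset.compl_empty]; exact Finset.subset_univ _, ?_⟩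
      rw [h1, hmna]
      exact h2
  have hm2 : NFam M m = {p | IsNBC M p.1 ∧ p.2 = ∅} := by
    ext p
    simp only [NFam, Set.mem_setOf_eq]
    have hcm : (Ek m m)ᶜ = (∅ : Finset (Fin m)) := by
      rw [Ek_self, Finset.compl_univ]
    constructor
    · rintro ⟨h1, h2, h3, h4⟩
      exact ⟨h2, Finset.subset_empty.mp (hcm ▸ h3)⟩
    · rintro ⟨h1, h2⟩
      refine ⟨by rw [Ek_self]; exact Finset.subset_univ _, h1, by rw [hcm, h2], ?_⟩
      intro X hX
      exfalso
      obtain ⟨Z, hZ, rfl⟩ := hX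
      obtain ⟨⟨Y', hY'del, hne', hZeq⟩, _⟩ := hZ
      obtain ⟨hYC, hdis⟩ := hY'del
      have hsup : supp Y' ⊆ p.1 := by
        intro a ha
        by_contra hcon
        exact Finset.disjoint_left.mp hdis ha (Finset.mem_sdiff.mpr
          ⟨by rw [Ek_self]; exact Finset.mem_univ a, hcon⟩)
      exact h1.no_subset hYC hsup
  have hb : Set.BijOn (psiIter M m) (NFam M 0) (NFam M m) := iterBij M m le_rfl
  refine ⟨h0, hm2, hb, ?_, ?_, ?_⟩
  · -- MapsTo
    intro A hA
    have h₁ : (∅, A) ∈ NFam M 0 := by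
      rw [h0]; exact ⟨rfl, hA⟩
    have h₂ := hb.mapsTo h₁
    rw [hm2] at h₂
    exact h₂.1
  · -- InjOn
    intro A₁ h₁ A₂ h₂ heq
    have m₁ : ((∅ : Finset (Fin m)), A₁) ∈ NFam M 0 := by rw [h0]; exact ⟨rfl, h₁⟩
    have m₂ : ((∅ : Finset (Fin m)), A₂) ∈ NFam M 0 := by rw [h0]; exact ⟨rfl, h₂⟩
    have e₁ := hb.mapsTo m₁
    have e₂ := hb.mapsTo m₂
    rw [hm2] at e₁ e₂
    have hpq : psiIter M m (∅, A₁) = psiIter M m (∅, A₂) := by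
      have hfst : (psiIter M m (∅, A₁)).1 = (psiIter M m (∅, A₂)).1 := heq
      have hsnd : (psiIter M m (∅, A₁)).2 = (psiIter M m (∅, A₂)).2 := by
        rw [e₁.2, e₂.2]
      exact Prod.ext hfst hsnd
    have := hb.injOn m₁ m₂ hpq
    simpa using this
  · -- SurjOn
    intro N hN
    have hmem : ((N, ∅) : Finset (Fin m) × Finset (Fin m)) ∈ NFam M m := by
      rw [hm2]; exact ⟨hN, rfl⟩
    obtain ⟨p, hp, hpe⟩ := hb.surjOn hmem
    rw [h0] at hp
    refine ⟨p.2, hp.2, ?_⟩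
    have hpeq : ((∅ : Finset (Fin m)), p.2) = p := Prod.ext hp.1.symm rfl
    show (psiIter M m (∅, p.2)).1 = N
    rw [hpeq, hpe]
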